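/- The Euclidean distance in ℝ³ between the line segment with endpoints (0,0,0) and (3,4,4) and the line segment with endpoints (4,1,2) and (0,4,3) equals 1/(5√42). -/

import Mathlib

/-- The infimum of Euclidean distances between points of two sets. -/
noncomputable def setDist {E : Type*} [PseudoMetricSpace E] (P Q : Set E) : ℝ :=
  sInf (Set.image2 dist P Q)

lemma sqrt_val : Real.sqrt (1/1050) = 1 / (5 * Real.sqrt 42) := by
  have h42 : (0:ℝ) < Real.sqrt 42 := Real.sqrt_pos.mpr (by norm_num)
  rw [show (1:ℝ)/1050 = (1 / (5 * Real.sqrt 42))^2 by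
    rw [div_pow, mul_pow, Real.sq_sqrt (by norm_num : (42:ℝ) ≥ 0)]; norm_num]
  exact Real.sqrt_sq (by positivity)

lemma dist_formula (a b c d : ℝ) :
    dist (a • (WithLp.equiv 2 (Fin 3 → ℝ)).symm ![0, 0, 0] + b • (WithLp.equiv 2 (Fin 3 → ℝ)).symm ![3, 4, 4])
      (c • (WithLp.equiv 2 (Fin 3 → ℝ)).symm ![4, 1, 2] + d • (WithLp.equiv 2 (Fin 3 → ℝ)).symm ![0, 4, 3])
    = Real.sqrt (((a*0+b*3) - (c*4+d*0))^2 + ((a*0+b*4) - (c*1+d*4))^2 + ((a*0+b*4) - (c*2+d*3))^2) := by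
  rw [EuclideanSpace.dist_eq, Fin.sum_univ_three]
  simp [PiLp.add_apply, PiLp.smul_apply, WithLp.equiv_symm_apply, PiLp.toLp_apply, Real.dist_eq, sq_abs,
    Fin.isValue, Matrix.cons_val_zero, Matrix.cons_val_one, Matrix.head_cons, smul_eq_mul]

theorem stmt_10 :
    setDist (segment ℝ ((WithLp.equiv 2 (Fin 3 → ℝ)).symm ![0, 0, 0]) ((WithLp.equiv 2 (Fin 3 → ℝ)).symm ![3, 4, 4]))
        (segment ℝ ((WithLp.equiv 2 (Fin 3 → ℝ)).symm ![4, 1, 2]) ((WithLp.equiv 2 (Fin 3 → ℝ)).symm ![0, 4, 3])) =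
      1 / (5 * Real.sqrt 42) := by
  have hlb : ∀ x ∈ Set.image2 dist
      (segment ℝ ((WithLp.equiv 2 (Fin 3 → ℝ)).symm ![0, 0, 0]) ((WithLp.equiv 2 (Fin 3 → ℝ)).symm ![3, 4, 4]))
      (segment ℝ ((WithLp.equiv 2 (Fin 3 → ℝ)).symm ![4, 1, 2]) ((WithLp.equiv 2 (Fin 3 → ℝ)).symm ![0, 4, 3])),
      1 / (5 * Real.sqrt 42) ≤ x := by
    rintro x ⟨p, ⟨a, b, ha, hb, hab, rfl⟩, q, ⟨c, d, hc, hd, hcd, rfl⟩, rfl⟩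
    rw [dist_formula, ← sqrt_val]
    apply Real.sqrt_le_sqrt
    nlinarith [sq_nonneg (41*b - 4*d - 24), sq_nonneg (1050*d - 547), hab, hcd]
  have hmem : (1 / (5 * Real.sqrt 42)) ∈ Set.image2 dist
      (segment ℝ ((WithLp.equiv 2 (Fin 3 → ℝ)).symm ![0, 0, 0]) ((WithLp.equiv 2 (Fin 3 → ℝ)).symm ![3, 4, 4]))
      (segment ℝ ((WithLp.equiv 2 (Fin 3 → ℝ)).symm ![4, 1, 2]) ((WithLp.equiv 2 (Fin 3 → ℝ)).symm ![0, 4, 3])) := by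
    refine ⟨_, ⟨191/525, 334/525, by norm_num, by norm_num, by norm_num, rfl⟩,
            _, ⟨503/1050, 547/1050, by norm_num, by norm_num, by norm_num, rfl⟩, ?_⟩
    rw [dist_formula, ← sqrt_val]
    norm_num
  refine le_antisymm (csInf_le ⟨_, hlb⟩ hmem) (le_csInf ⟨_, hmem⟩ hlb)
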